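/- In the chord-space model, for arbitrary real parameters q, q_m, r and arbitrary μ ∈ ℂ, the complex linear span of the set of vectors { (H̃_{R,i₁} ∘ ⋯ ∘ H̃_{R,i_k})(ω) : k ∈ ℕ, i₁,…,i_k ∈ {0,1} } is all of V. (Algebraic form of Lemma 1: the vacuum ω is a cyclic vector for the EoW-brane boundary algebra generated by H̃_{R,0} and H̃_{R,1}.) -/
import Mathlib


namespace DSSYK

/-- Binary strings (chord words); the letter `0` is `false`, the letter `1` is `true`. -/
abbrev Str : Type := List Bool

/-- The chord space: finitely supported complex functions on binary strings. -/
abbrev Sp : Type := Str →₀ ℂ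

/-- Crossing weights: `Q 0 0 = q`, `Q 1 1 = q_m`, mixed crossings give `r`. -/
def Qmat (q qm r : ℝ) : Bool → Bool → ℂ
  | false, false => (q : ℂ)
  | true,  true  => (qm : ℂ)
  | _,     _     => (r : ℂ)

/-- Right creation `a†_{R,i}`: append the letter `i` on the right. -/
noncomputable def creR (i : Bool) : Sp →ₗ[ℂ] Sp :=
  Finsupp.lift Sp ℂ Str fun w => Finsupp.single (w ++ [i]) 1

/-- Value of the right annihilation operator on a basis string: delete one letter
equal to `i`, weighted by the crossing factors with all letters to its right. -/
noncomputable def annVecR (Q : Bool → Bool → ℂ) (i : Bool) : Str → Sp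
  | [] => 0
  | x :: t =>
      (if x = i then ((t.map (Q i)).prod) • Finsupp.single t (1 : ℂ) else 0)
        + Finsupp.mapDomain (List.cons x) (annVecR Q i t)

/-- Right annihilation `a_{R,i}`. -/
noncomputable def annR (Q : Bool → Bool → ℂ) (i : Bool) : Sp →ₗ[ℂ] Sp :=
  Finsupp.lift Sp ℂ Str (annVecR Q i)

/-- Left creation `a†_{L,i}`: prepend the letter `i`. -/
noncomputable def creL (i : Bool) : Sp →ₗ[ℂ] Sp :=
  Finsupp.lift Sp ℂ Str fun w => Finsupp.single (i :: w) 1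

/-- Value of the left annihilation operator on a basis string: delete one letter
equal to `i`, weighted by the crossing factors with all letters to its left. -/
noncomputable def annVecL (Q : Bool → Bool → ℂ) (i : Bool) : Str → Sp
  | [] => 0
  | x :: t =>
      (if x = i then Finsupp.single t (1 : ℂ) else 0)
        + Q i x • Finsupp.mapDomain (List.cons x) (annVecL Q i t)

/-- Left annihilation `a_{L,i}`. -/
noncomputable def annL (Q : Bool → Bool → ℂ) (i : Bool) : Sp →ₗ[ℂ] Sp :=
  Finsupp.lift Sp ℂ Str (annVecL Q i)

/-- Diagonal weight operator `δ_w ↦ c₀^{N₀(w)} · c₁^{N₁(w)} · δ_w`, where `N₀, N₁`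
count the `0`'s and `1`'s in `w`. -/
noncomputable def Wgen (c₀ c₁ : ℂ) : Sp →ₗ[ℂ] Sp :=
  Finsupp.lift Sp ℂ Str fun w =>
    Finsupp.single w (c₀ ^ (w.count false) * c₁ ^ (w.count true))

/-- The chord-counting weight operator `W δ_w = q^{N₀(w)} r^{N₁(w)} δ_w`. -/
noncomputable def Wop (q r : ℝ) : Sp →ₗ[ℂ] Sp := Wgen (q : ℂ) (r : ℂ)

/-- Right boundary operators `H_{R,i} = a_{R,i} + a†_{R,i}`. -/
noncomputable def HR (Q : Bool → Bool → ℂ) (i : Bool) : Sp →ₗ[ℂ] Sp := annR Q i + creR i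

/-- Left boundary operators `H_{L,i} = a_{L,i} + a†_{L,i}`. -/
noncomputable def HL (Q : Bool → Bool → ℂ) (i : Bool) : Sp →ₗ[ℂ] Sp := annL Q i + creL i

/-- The vacuum `ω = δ_{[]}` (the empty string). -/
noncomputable def vac : Sp := Finsupp.single [] 1

/-- `ε v = v([])`, the coefficient of the empty string. -/
def eps (v : Sp) : ℂ := v []

end DSSYK

namespace DSSYK

/-- The EoW-brane boundary generators: `H̃_{R,0} = H_{R,0} + μW` and `H̃_{R,1} = H_{R,1}`. -/
noncomputable def HRt (q qm r : ℝ) (μ : ℂ) (i : Bool) : Module.End ℂ Sp :=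
  HR (Qmat q qm r) i + if i = false then μ • Wop q r else 0

end DSSYK


namespace DSSYK

open Finsupp

lemma annVecR_support (Q : Bool → Bool → ℂ) (i : Bool) :
    ∀ w : Str, ∀ x ∈ (annVecR Q i w).support, x.length < w.length := by
  intro w
  induction w with
  | nil => simp [annVecR]
  | cons y t ih =>
    intro x hx
    rw [annVecR] at hx
    have := Finsupp.support_add hx
    classical
    rcases Finset.mem_union.mp this with h | h
    · by_cases hy : y = i
      · simp only [hy, if_pos rfl] at h
        have := Finsupp.support_smul h
        have := Finsupp.support_single_subset this
        simp at this
        subst this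
        simp
      · simp [hy] at h
    · have := Finsupp.mapDomain_support h
      rcases Finset.mem_image.mp this with ⟨x', hx', rfl⟩
      have := ih x' hx'
      simpa using Nat.succ_lt_succ this

lemma annR_single (Q : Bool → Bool → ℂ) (i : Bool) (w : Str) :
    annR Q i (Finsupp.single w 1) = annVecR Q i w := by
  simp [annR, Finsupp.lift_apply, Finsupp.sum_single_index]

lemma creR_single (i : Bool) (w : Str) :
    creR i (Finsupp.single w 1) = Finsupp.single (w ++ [i]) 1 := by
  simp [creR, Finsupp.lift_apply, Finsupp.sum_single_index]

lemma Wop_single (q r : ℝ) (w : Str) :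
    Wop q r (Finsupp.single w 1) =
      ((q : ℂ) ^ (w.count false) * (r : ℂ) ^ (w.count true)) • Finsupp.single w 1 := by
  simp [Wop, Wgen, Finsupp.lift_apply, Finsupp.sum_single_index, Finsupp.smul_single]

lemma HRt_single (q qm r : ℝ) (μ : ℂ) (i : Bool) (w : Str) :
    HRt q qm r μ i (Finsupp.single w 1) =
      Finsupp.single (w ++ [i]) 1 + annVecR (Qmat q qm r) i w
        + (if i = false then μ * ((q : ℂ) ^ (w.count false) * (r : ℂ) ^ (w.count true)) else 0)
            • Finsupp.single w 1 := by
  rw [HRt, HR]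
  by_cases hi : i = false
  · have hsm : ∀ (c : ℂ) (f : Module.End ℂ Sp) (v : Sp), (c • f) v = c • f v :=
      fun _ _ _ => rfl
    simp only [hi, if_pos rfl, if_true, eq_self_iff_true, LinearMap.add_apply,
      annR_single, creR_single]
    rw [LinearMap.smul_apply, Wop_single, smul_smul]
    abel
  · simp only [if_neg hi, LinearMap.add_apply, add_zero, zero_smul,
      annR_single, creR_single]
    abel

end DSSYK

open DSSYK in
/-- the vacuum `ω` is cyclic for the EoW-brane boundary algebra:
the span of all vectors `H̃_{R,i₁} ∘ ⋯ ∘ H̃_{R,i_k} ω` is the whole chord space. -/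
theorem stmt_9 (q qm r : ℝ) (μ : ℂ) :
    Submodule.span ℂ
        {v : Sp | ∃ l : List Bool, v = ((l.map (HRt q qm r μ)).prod) vac} = ⊤ := by
  classical
  set S : Set Sp := {v : Sp | ∃ l : List Bool, v = ((l.map (HRt q qm r μ)).prod) vac} with hS
  set P : Submodule ℂ Sp := Submodule.span ℂ S with hP
  have hvac : vac ∈ P := Submodule.subset_span ⟨[], by simp⟩
  have hstep : ∀ i : Bool, ∀ v ∈ S, HRt q qm r μ i v ∈ S := by
    rintro i v ⟨l, rfl⟩
    exact ⟨i :: l, by simp [Module.End.mul_apply]⟩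
  have hstepP : ∀ i : Bool, ∀ v ∈ P, HRt q qm r μ i v ∈ P := by
    intro i v hv
    refine Submodule.span_induction (fun x hx => Submodule.subset_span (hstep i x hx))
      (by simp) (fun x y _ _ hx hy => by simpa using Submodule.add_mem P hx hy)
      (fun c x _ hx => by simpa using Submodule.smul_mem P c hx) hv
  have key : ∀ n : ℕ, ∀ w : Str, w.length ≤ n → Finsupp.single w (1 : ℂ) ∈ P := by
    intro n
    induction n with
    | zero =>
      intro w hw
      have : w = [] := List.length_eq_zero_iff.mp (Nat.le_zero.mp hw)
      subst this
      exact hvac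
    | succ n ih =>
      intro w hw
      rcases Nat.lt_or_ge w.length (n + 1) with h | h
      · exact ih w (Nat.lt_succ_iff.mp h)
      · have hlen : w.length = n + 1 := le_antisymm hw h
        have hne : w ≠ [] := by
          intro h0; rw [h0] at hlen; simp at hlen
        set a := w.dropLast with ha
        set b := w.getLast hne with hb
        have hw' : a ++ [b] = w := List.dropLast_append_getLast hne
        have hal : a.length = n := by
          have := congrArg List.length hw'
          simp [hlen] at this
          omega
        have haP : Finsupp.single a (1 : ℂ) ∈ P := ih a (le_of_eq hal)
        have hann : annVecR (Qmat q qm r) b a ∈ P := by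
          have : annVecR (Qmat q qm r) b a =
              (annVecR (Qmat q qm r) b a).sum (fun x c => Finsupp.single x c) :=
            (Finsupp.sum_single _).symm
          rw [this]
          refine Submodule.sum_mem P (fun x hx => ?_)
          have hxl : x.length < a.length := annVecR_support _ _ a x hx
          have : Finsupp.single x ((annVecR (Qmat q qm r) b a) x) =
              ((annVecR (Qmat q qm r) b a) x) • Finsupp.single x (1 : ℂ) := by
            simp [Finsupp.smul_single]
          show Finsupp.single x ((annVecR (Qmat q qm r) b a) x) ∈ P
          rw [this]
          exact Submodule.smul_mem P _ (ih x (by omega))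
        have heq := HRt_single q qm r μ b a
        have : Finsupp.single (a ++ [b]) (1 : ℂ) =
            HRt q qm r μ b (Finsupp.single a 1) - annVecR (Qmat q qm r) b a
              - (if b = false then μ * ((q : ℂ) ^ (a.count false) * (r : ℂ) ^ (a.count true)) else 0)
                  • Finsupp.single a 1 := by
          rw [heq]; abel
        rw [← hw', this]
        exact Submodule.sub_mem P (Submodule.sub_mem P (hstepP b _ haP) hann)
          (Submodule.smul_mem P _ haP)
  rw [eq_top_iff]
  have hb : Submodule.span ℂ (Set.range fun w : Str =>
      Finsupp.single w (1 : ℂ)) = ⊤ := by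
    simpa using (Finsupp.basisSingleOne (R := ℂ) (ι := Str)).span_eq
  rw [← hb]
  refine Submodule.span_le.mpr ?_
  rintro v ⟨w, rfl⟩
  exact key w.length w le_rfl
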